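/- Let χ₃ be the nontrivial Dirichlet character modulo 3 and χ₄ the nontrivial Dirichlet character modulo 4, and define σ₃⁺(n) = Σ_{d|n} d²·χ₃(n/d) and σ₄⁺(n) = Σ_{d|n} d²·χ₄(n/d). Then for every positive integer n₀ not divisible by 2 or 3, ∏_{p prime, p ≡ 7 (mod 12)} (p²−1)/(p²+1) ≤ σ₄⁺(n₀)/σ₃⁺(n₀) ≤ ∏_{p prime, p ≡ 5 (mod 12)} (p²+1)/(p²−1), where the products run over all primes in the indicated congruence classes (and converge). -/

import Mathlib

/-- The nontrivial Dirichlet character modulo 3, as a function on `ℕ`. -/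
noncomputable def chi3 (n : ℕ) : ℝ :=
  if n % 3 = 1 then 1 else if n % 3 = 2 then -1 else 0

/-- The nontrivial Dirichlet character modulo 4, as a function on `ℕ`. -/
noncomputable def chi4 (n : ℕ) : ℝ :=
  if n % 4 = 1 then 1 else if n % 4 = 3 then -1 else 0

/-- The twisted divisor sum `σ₃⁺(n) = Σ_{d|n} d²·χ₃(n/d)`. -/
noncomputable def sigma3Plus (n : ℕ) : ℝ :=
  ∑ d ∈ n.divisors, (d : ℝ) ^ 2 * chi3 (n / d)

/-- The twisted divisor sum `σ₄⁺(n) = Σ_{d|n} d²·χ₄(n/d)`. -/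
noncomputable def sigma4Plus (n : ℕ) : ℝ :=
  ∑ d ∈ n.divisors, (d : ℝ) ^ 2 * chi4 (n / d)

open Finset Real

lemma chi3_mul (m n : ℕ) : chi3 (m * n) = chi3 m * chi3 n := by
  unfold chi3
  rw [Nat.mul_mod]
  have h1 : m % 3 = 0 ∨ m % 3 = 1 ∨ m % 3 = 2 := by omega
  have h2 : n % 3 = 0 ∨ n % 3 = 1 ∨ n % 3 = 2 := by omega
  rcases h1 with h|h|h <;> rcases h2 with h'|h'|h' <;> rw [h, h'] <;> norm_num

lemma chi4_mul (m n : ℕ) : chi4 (m * n) = chi4 m * chi4 n := by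
  unfold chi4
  rw [Nat.mul_mod]
  have h1 : m % 4 = 0 ∨ m % 4 = 1 ∨ m % 4 = 2 ∨ m % 4 = 3 := by omega
  have h2 : n % 4 = 0 ∨ n % 4 = 1 ∨ n % 4 = 2 ∨ n % 4 = 3 := by omega
  rcases h1 with h|h|h|h <;> rcases h2 with h'|h'|h'|h' <;> rw [h, h'] <;> norm_num

lemma chi3_pow (p k : ℕ) : chi3 (p ^ k) = chi3 p ^ k := by
  induction k with
  | zero => simp [chi3]
  | succ k ih => rw [pow_succ, pow_succ, chi3_mul, ih]

lemma chi4_pow (p k : ℕ) : chi4 (p ^ k) = chi4 p ^ k := by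
  induction k with
  | zero => simp [chi4]
  | succ k ih => rw [pow_succ, pow_succ, chi4_mul, ih]

/-- Twisted geometric sum `Σ_{j≤k} x^{2j} ε^{k-j}`. -/
noncomputable def Gs (x ε : ℝ) (k : ℕ) : ℝ := ∑ j ∈ Finset.range (k+1), x^(2*j) * ε^(k-j)

lemma Gs_succ (x ε : ℝ) (k : ℕ) : Gs x ε (k+1) = ε^(k+1) + x^2 * Gs x ε k := by
  unfold Gs
  rw [Finset.sum_range_succ', Finset.mul_sum]
  rw [add_comm]
  congr 1
  · simp
  · apply Finset.sum_congr rfl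
    intro i hi
    have h : k + 1 - (i+1) = k - i := by omega
    rw [h]
    ring

lemma Gs_one (x : ℝ) (k : ℕ) : (x^2 - 1) * Gs x 1 k = x^(2*(k+1)) - 1 := by
  induction k with
  | zero => simp [Gs]
  | succ k ih =>
    rw [Gs_succ, one_pow]
    have h2 : x^(2*(k+1+1)) = x^(2*(k+1)) * x^2 := by rw [← pow_add]; ring_nf
    nlinarith [ih]

lemma Gs_neg (x : ℝ) (k : ℕ) : (x^2 + 1) * Gs x (-1) k = x^(2*(k+1)) + (-1)^k := by
  induction k with
  | zero => simp [Gs]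
  | succ k ih =>
    rw [Gs_succ]
    have h2 : x^(2*(k+1+1)) = x^(2*(k+1)) * x^2 := by rw [← pow_add]; ring_nf
    have h3 : ((-1:ℝ))^(k+1) = -(-1)^k := by rw [pow_succ]; ring
    nlinarith [ih]

lemma xsq_le (x : ℝ) (hx : 2 ≤ x) (k : ℕ) : x^2 ≤ x^(2*(k+1)) :=
  pow_le_pow_right₀ (by linarith) (by omega)

lemma Gs_one_pos (x : ℝ) (hx : 2 ≤ x) (k : ℕ) : 0 < Gs x 1 k := by
  have h1 := Gs_one x k
  have h2 := xsq_le x hx k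
  have h3 : (0:ℝ) < x^2 - 1 := by nlinarith
  nlinarith

lemma Gs_neg_pos (x : ℝ) (hx : 2 ≤ x) (k : ℕ) : 0 < Gs x (-1) k := by
  have h1 := Gs_neg x k
  have h2 := xsq_le x hx k
  rcases neg_one_pow_eq_or ℝ k with hs|hs <;> rw [hs] at h1 <;> nlinarith

lemma Gs_le (x : ℝ) (hx : 2 ≤ x) (k : ℕ) : Gs x (-1) k ≤ Gs x 1 k := by
  have h1 := Gs_one x k
  have h2 := Gs_neg x k
  have hX := xsq_le x hx k
  have expand : (x^2-1)*(x^2+1)*(Gs x 1 k - Gs x (-1) k)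
      = (x^2+1)*((x^2-1)*Gs x 1 k) - (x^2-1)*((x^2+1)*Gs x (-1) k) := by ring
  rw [h1, h2] at expand
  have hx2 : (4:ℝ) ≤ x^2 := by nlinarith [sq_nonneg (x-2)]
  have h3 : (0:ℝ) < (x^2-1)*(x^2+1) := by nlinarith
  have h5 : (x^2-1)*(x^2+1)*(0:ℝ) ≤ (x^2-1)*(x^2+1)*(Gs x 1 k - Gs x (-1) k) := by
    rw [mul_zero, expand]
    rcases neg_one_pow_eq_or ℝ k with hs|hs <;> rw [hs] <;> nlinarith
  linarith [le_of_mul_le_mul_left h5 h3]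

lemma Gs_cross (x : ℝ) (hx : 2 ≤ x) (k : ℕ) :
    (x^2-1) * Gs x 1 k ≤ (x^2+1) * Gs x (-1) k := by
  rw [Gs_one, Gs_neg]
  rcases neg_one_pow_eq_or ℝ k with hs|hs <;> rw [hs] <;> linarith

noncomputable def sqAF : ArithmeticFunction ℝ := ⟨fun n => (n:ℝ)^2, by norm_num⟩
noncomputable def chiAF (χ : ℕ → ℝ) (h0 : χ 0 = 0) : ArithmeticFunction ℝ := ⟨χ, h0⟩

lemma sigma_gen_apply (χ : ℕ → ℝ) (h0 : χ 0 = 0) (n : ℕ) :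
    (sqAF * chiAF χ h0) n = ∑ d ∈ n.divisors, (d : ℝ) ^ 2 * χ (n / d) := by
  rw [ArithmeticFunction.mul_apply]
  rw [show (fun x : ℕ × ℕ => sqAF x.1 * (chiAF χ h0) x.2)
      = fun x : ℕ × ℕ => ((x.1:ℝ)^2 * χ x.2) from rfl]
  exact Nat.sum_divisorsAntidiagonal (f := fun a b => ((a:ℝ)^2 * χ b))

lemma sigma_gen_mult (χ : ℕ → ℝ) (h0 : χ 0 = 0) (h1 : χ 1 = 1)
    (hmul : ∀ m n, χ (m*n) = χ m * χ n) :
    (sqAF * chiAF χ h0).IsMultiplicative := by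
  have hsq : sqAF.IsMultiplicative := by
    constructor
    · show ((1:ℕ):ℝ)^2 = 1; norm_num
    · intro a b _
      show ((a*b : ℕ):ℝ)^2 = ((a:ℕ):ℝ)^2 * ((b:ℕ):ℝ)^2
      push_cast; ring
  have hchi : (chiAF χ h0).IsMultiplicative := ⟨h1, fun {a b} _ => hmul a b⟩
  exact hsq.mul hchi

lemma sigma_gen_factor (χ : ℕ → ℝ) (h0 : χ 0 = 0) (h1 : χ 1 = 1)
    (hmul : ∀ m n, χ (m*n) = χ m * χ n) {n : ℕ} (hn : n ≠ 0) :
    (∑ d ∈ n.divisors, (d : ℝ) ^ 2 * χ (n / d)) =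
      ∏ p ∈ n.primeFactors,
        (∑ d ∈ (p ^ n.factorization p).divisors,
          (d : ℝ) ^ 2 * χ ((p ^ n.factorization p) / d)) := by
  have key := (sigma_gen_mult χ h0 h1 hmul).multiplicative_factorization _ hn
  rw [sigma_gen_apply] at key
  rw [key, Finsupp.prod, Nat.support_factorization]
  exact Finset.prod_congr rfl fun p _ => sigma_gen_apply χ h0 _

lemma sigma_pp (χ : ℕ → ℝ) (hpow : ∀ p k, χ (p^k) = χ p ^ k)
    {p : ℕ} (hp : p.Prime) (k : ℕ) :
    (∑ d ∈ (p^k).divisors, (d:ℝ)^2 * χ (p^k / d)) = Gs p (χ p) k := by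
  rw [Nat.sum_divisors_prime_pow hp]
  unfold Gs
  refine Finset.sum_congr rfl fun j hj => ?_
  have hjk : j ≤ k := Nat.lt_succ_iff.mp (Finset.mem_range.mp hj)
  rw [Nat.pow_div hjk hp.pos, hpow]
  push_cast
  rw [← pow_mul, Nat.mul_comm j 2]

lemma summable_logf (P : ℕ → Prop) (hP : ∀ p, P p → 5 ≤ p) :
    Summable (fun p : {p : ℕ // P p} =>
      Real.log ((((p:ℕ):ℝ)^2+1)/((((p:ℕ)):ℝ)^2-1))) := by
  have base : Summable (fun n : ℕ => 4 * (1 / (n:ℝ)^2)) :=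
    (Real.summable_one_div_nat_pow.mpr one_lt_two).mul_left 4
  have hsub : Summable (fun p : {p : ℕ // P p} => 4 * (1 / ((p:ℕ):ℝ)^2)) :=
    base.comp_injective Subtype.val_injective
  apply hsub.of_nonneg_of_le
  · intro p
    have hx : (5:ℝ) ≤ ((p:ℕ):ℝ) := by exact_mod_cast hP _ p.2
    have h1 : (0:ℝ) < ((p:ℕ):ℝ)^2 - 1 := by nlinarith
    apply Real.log_nonneg
    rw [le_div_iff₀ h1]
    linarith
  · intro p
    have hx : (5:ℝ) ≤ ((p:ℕ):ℝ) := by exact_mod_cast hP _ p.2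
    set x : ℝ := ((p:ℕ):ℝ) with hxdef
    have h1 : (0:ℝ) < x^2 - 1 := by nlinarith
    have h2 : (0:ℝ) < x^2 + 1 := by nlinarith
    calc Real.log ((x^2+1)/(x^2-1)) ≤ (x^2+1)/(x^2-1) - 1 :=
          Real.log_le_sub_one_of_pos (by positivity)
      _ = 2/(x^2-1) := by field_simp; norm_num
      _ ≤ 4 * (1/x^2) := by
          have h4 : 4 * (1/x^2) = 4/x^2 := by ring
          rw [h4, div_le_div_iff₀ h1 (by positivity)]
          nlinarith

lemma log_nonneg_f (x : ℝ) (hx : 5 ≤ x) : 0 ≤ Real.log ((x^2+1)/(x^2-1)) := by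
  have h1 : (0:ℝ) < x^2 - 1 := by nlinarith
  apply Real.log_nonneg
  rw [le_div_iff₀ h1]
  linarith

lemma summable_logg (P : ℕ → Prop) (hP : ∀ p, P p → 5 ≤ p) :
    Summable (fun p : {p : ℕ // P p} =>
      Real.log ((((p:ℕ):ℝ)^2-1)/((((p:ℕ)):ℝ)^2+1))) := by
  refine (summable_logf P hP).neg.congr fun p => ?_
  rw [← Real.log_inv, inv_div]

lemma mult_f (P : ℕ → Prop) (hP : ∀ p, P p → 5 ≤ p) :
    Multipliable (fun p : {p : ℕ // P p} =>
      (((p:ℕ):ℝ)^2+1)/((((p:ℕ)):ℝ)^2-1)) := by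
  apply Real.multipliable_of_summable_log
  · intro p
    have hx : (5:ℝ) ≤ ((p:ℕ):ℝ) := by exact_mod_cast hP _ p.2
    have h1 : (0:ℝ) < ((p:ℕ):ℝ)^2 - 1 := by nlinarith
    positivity
  · exact summable_logf P hP

lemma mult_g (P : ℕ → Prop) (hP : ∀ p, P p → 5 ≤ p) :
    Multipliable (fun p : {p : ℕ // P p} =>
      (((p:ℕ):ℝ)^2-1)/((((p:ℕ)):ℝ)^2+1)) := by
  apply Real.multipliable_of_summable_log
  · intro p
    have hx : (5:ℝ) ≤ ((p:ℕ):ℝ) := by exact_mod_cast hP _ p.2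
    have h1 : (0:ℝ) < ((p:ℕ):ℝ)^2 - 1 := by nlinarith
    positivity
  · exact summable_logg P hP

lemma tprod_f_exp (P : ℕ → Prop) (hP : ∀ p, P p → 5 ≤ p) :
    (∏' p : {p : ℕ // P p}, (((p:ℕ):ℝ)^2+1)/((((p:ℕ)):ℝ)^2-1))
      = Real.exp (∑' p : {p : ℕ // P p},
          Real.log ((((p:ℕ):ℝ)^2+1)/((((p:ℕ)):ℝ)^2-1))) := by
  have key := Real.rexp_tsum_eq_tprod
    (f := fun (p : {p : ℕ // P p}) => (((p:ℕ):ℝ)^2+1)/((((p:ℕ)):ℝ)^2-1))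
    (fun p => by
      have hx : (5:ℝ) ≤ ((p:ℕ):ℝ) := by exact_mod_cast hP _ p.2
      have h1 : (0:ℝ) < ((p:ℕ):ℝ)^2 - 1 := by nlinarith
      positivity)
    (summable_logf P hP)
  exact key.symm

lemma tprod_g_exp (P : ℕ → Prop) (hP : ∀ p, P p → 5 ≤ p) :
    (∏' p : {p : ℕ // P p}, (((p:ℕ):ℝ)^2-1)/((((p:ℕ)):ℝ)^2+1))
      = Real.exp (∑' p : {p : ℕ // P p},
          Real.log ((((p:ℕ):ℝ)^2-1)/((((p:ℕ)):ℝ)^2+1))) := by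
  have key := Real.rexp_tsum_eq_tprod
    (f := fun (p : {p : ℕ // P p}) => (((p:ℕ):ℝ)^2-1)/((((p:ℕ)):ℝ)^2+1))
    (fun p => by
      have hx : (5:ℝ) ≤ ((p:ℕ):ℝ) := by exact_mod_cast hP _ p.2
      have h1 : (0:ℝ) < ((p:ℕ):ℝ)^2 - 1 := by nlinarith
      positivity)
    (summable_logg P hP)
  exact key.symm

theorem sigma4_div_sigma3_bounds
    (n₀ : ℕ) (h : 0 < n₀) (h2 : ¬ (2 ∣ n₀)) (h3 : ¬ (3 ∣ n₀)) :
    Multipliable (fun p : {p : ℕ // p.Prime ∧ p % 12 = 7} =>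
      (((p : ℕ) : ℝ) ^ 2 - 1) / (((p : ℕ) : ℝ) ^ 2 + 1)) ∧
    Multipliable (fun p : {p : ℕ // p.Prime ∧ p % 12 = 5} =>
      (((p : ℕ) : ℝ) ^ 2 + 1) / (((p : ℕ) : ℝ) ^ 2 - 1)) ∧
    (∏' p : {p : ℕ // p.Prime ∧ p % 12 = 7},
        (((p : ℕ) : ℝ) ^ 2 - 1) / (((p : ℕ) : ℝ) ^ 2 + 1)) ≤
      sigma4Plus n₀ / sigma3Plus n₀ ∧
    sigma4Plus n₀ / sigma3Plus n₀ ≤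
      ∏' p : {p : ℕ // p.Prime ∧ p % 12 = 5},
        (((p : ℕ) : ℝ) ^ 2 + 1) / (((p : ℕ) : ℝ) ^ 2 - 1) := by
  classical
  have hP7 : ∀ p : ℕ, (p.Prime ∧ p % 12 = 7) → 5 ≤ p := fun p hp => by omega
  have hP5 : ∀ p : ℕ, (p.Prime ∧ p % 12 = 5) → 5 ≤ p := fun p hp => by omega
  set k : ℕ → ℕ := fun p => n₀.factorization p with hk
  have h03 : chi3 0 = 0 := by norm_num [chi3]
  have h13 : chi3 1 = 1 := by norm_num [chi3]
  have h04 : chi4 0 = 0 := by norm_num [chi4]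
  have h14 : chi4 1 = 1 := by norm_num [chi4]
  have hfac3 : sigma3Plus n₀ = ∏ p ∈ n₀.primeFactors, Gs p (chi3 p) (k p) := by
    rw [sigma3Plus, sigma_gen_factor chi3 h03 h13 chi3_mul h.ne']
    exact Finset.prod_congr rfl fun p hp =>
      sigma_pp chi3 chi3_pow (Nat.prime_of_mem_primeFactors hp) _
  have hfac4 : sigma4Plus n₀ = ∏ p ∈ n₀.primeFactors, Gs p (chi4 p) (k p) := by
    rw [sigma4Plus, sigma_gen_factor chi4 h04 h14 chi4_mul h.ne']
    exact Finset.prod_congr rfl fun p hp =>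
      sigma_pp chi4 chi4_pow (Nat.prime_of_mem_primeFactors hp) _
  have hfacts : ∀ p ∈ n₀.primeFactors, 5 ≤ p ∧ ¬ 2 ∣ p ∧ ¬ 3 ∣ p := by
    intro p hp
    have hp' := Nat.prime_of_mem_primeFactors hp
    have hdvd := Nat.dvd_of_mem_primeFactors hp
    have hp2 : ¬ 2 ∣ p := fun hd => h2 (hd.trans hdvd)
    have hp3 : ¬ 3 ∣ p := fun hd => h3 (hd.trans hdvd)
    exact ⟨by have := hp'.two_le; omega, hp2, hp3⟩
  have key : ∀ p ∈ n₀.primeFactors,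
      0 < Gs p (chi3 p) (k p) ∧ 0 < Gs p (chi4 p) (k p) ∧
      (if p % 12 = 7 then ((p:ℝ)^2-1)/((p:ℝ)^2+1) else 1)
        ≤ Gs p (chi4 p) (k p) / Gs p (chi3 p) (k p) ∧
      Gs p (chi4 p) (k p) / Gs p (chi3 p) (k p)
        ≤ (if p % 12 = 5 then ((p:ℝ)^2+1)/((p:ℝ)^2-1) else 1) := by
    intro p hp
    obtain ⟨hp5, hp2', hp3'⟩ := hfacts p hp
    have hm : p % 12 = 1 ∨ p % 12 = 5 ∨ p % 12 = 7 ∨ p % 12 = 11 := by omega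
    have hx : (2:ℝ) ≤ (p:ℝ) := by exact_mod_cast (by omega : 2 ≤ p)
    have h1p := Gs_one_pos (p:ℝ) hx (k p)
    have hnp := Gs_neg_pos (p:ℝ) hx (k p)
    have hle := Gs_le (p:ℝ) hx (k p)
    have hcross := Gs_cross (p:ℝ) hx (k p)
    have hx2 : (0:ℝ) < (p:ℝ)^2 - 1 := by nlinarith
    have hx2' : (0:ℝ) < (p:ℝ)^2 + 1 := by nlinarith
    rcases hm with hm|hm|hm|hm
    · have c3 : chi3 p = 1 := by
        have hq : p % 3 = 1 := by omega
        simp [chi3, hq]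
      have c4 : chi4 p = 1 := by
        have hq : p % 4 = 1 := by omega
        simp [chi4, hq]
      rw [c3, c4, if_neg (by omega : ¬ p % 12 = 7), if_neg (by omega : ¬ p % 12 = 5),
        div_self h1p.ne']
      exact ⟨h1p, h1p, le_refl 1, le_refl 1⟩
    · have c3 : chi3 p = -1 := by
        have hq : p % 3 = 2 := by omega
        simp [chi3, hq]
      have c4 : chi4 p = 1 := by
        have hq : p % 4 = 1 := by omega
        simp [chi4, hq]
      rw [c3, c4, if_neg (by omega : ¬ p % 12 = 7), if_pos hm]
      refine ⟨hnp, h1p, ?_, ?_⟩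
      · rw [le_div_iff₀ hnp, one_mul]
        exact hle
      · rw [div_le_div_iff₀ hnp hx2]
        nlinarith [hcross]
    · have c3 : chi3 p = 1 := by
        have hq : p % 3 = 1 := by omega
        simp [chi3, hq]
      have c4 : chi4 p = -1 := by
        have hq : p % 4 = 3 := by omega
        simp [chi4, hq]
      rw [c3, c4, if_pos hm, if_neg (by omega : ¬ p % 12 = 5)]
      refine ⟨h1p, hnp, ?_, ?_⟩
      · rw [div_le_div_iff₀ hx2' h1p]
        nlinarith [hcross]
      · rw [div_le_one h1p]
        exact hle
    · have c3 : chi3 p = -1 := by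
        have hq : p % 3 = 2 := by omega
        simp [chi3, hq]
      have c4 : chi4 p = -1 := by
        have hq : p % 4 = 3 := by omega
        simp [chi4, hq]
      rw [c3, c4, if_neg (by omega : ¬ p % 12 = 7), if_neg (by omega : ¬ p % 12 = 5),
        div_self hnp.ne']
      exact ⟨hnp, hnp, le_refl 1, le_refl 1⟩
  have hs3pos : 0 < sigma3Plus n₀ := by
    rw [hfac3]
    exact Finset.prod_pos fun p hp => (key p hp).1
  have hratio : sigma4Plus n₀ / sigma3Plus n₀
      = ∏ p ∈ n₀.primeFactors, (Gs p (chi4 p) (k p) / Gs p (chi3 p) (k p)) := by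
    rw [hfac3, hfac4, ← Finset.prod_div_distrib]
  refine ⟨mult_g _ hP7, mult_f _ hP5, ?_, ?_⟩
  · -- lower bound
    rw [hratio]
    have step1 : (∏' p : {p : ℕ // p.Prime ∧ p % 12 = 7},
          (((p:ℕ):ℝ)^2-1)/(((p:ℕ):ℝ)^2+1))
        ≤ ∏ q ∈ n₀.primeFactors.subtype (fun p => p.Prime ∧ p % 12 = 7),
            (((q:ℕ):ℝ)^2-1)/(((q:ℕ):ℝ)^2+1) := by
      set T := n₀.primeFactors.subtype (fun p => p.Prime ∧ p % 12 = 7)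
      have hpos : ∀ q : {p : ℕ // p.Prime ∧ p % 12 = 7},
          0 < (((q:ℕ):ℝ)^2-1)/(((q:ℕ):ℝ)^2+1) := by
        intro q
        have hq : (5:ℝ) ≤ ((q:ℕ):ℝ) := by exact_mod_cast hP7 _ q.2
        have : (0:ℝ) < ((q:ℕ):ℝ)^2 - 1 := by nlinarith
        positivity
      have hsum := Summable.sum_le_tsum T (fun q _ => log_nonneg_f ((q:ℕ):ℝ)
        (by exact_mod_cast hP7 _ q.2)) (summable_logf _ hP7)
      have hglog : ∀ q : {p : ℕ // p.Prime ∧ p % 12 = 7},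
          Real.log ((((q:ℕ):ℝ)^2-1)/(((q:ℕ):ℝ)^2+1))
            = - Real.log ((((q:ℕ):ℝ)^2+1)/(((q:ℕ):ℝ)^2-1)) := by
        intro q
        rw [← Real.log_inv, inv_div]
      have e1 : (∑' q : {p : ℕ // p.Prime ∧ p % 12 = 7},
            Real.log ((((q:ℕ):ℝ)^2-1)/(((q:ℕ):ℝ)^2+1)))
          = - ∑' q : {p : ℕ // p.Prime ∧ p % 12 = 7},
              Real.log ((((q:ℕ):ℝ)^2+1)/(((q:ℕ):ℝ)^2-1)) := by
        rw [← tsum_neg]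
        exact tsum_congr fun q => hglog q
      have e2 : (∑ q ∈ T, Real.log ((((q:ℕ):ℝ)^2-1)/(((q:ℕ):ℝ)^2+1)))
          = - ∑ q ∈ T, Real.log ((((q:ℕ):ℝ)^2+1)/(((q:ℕ):ℝ)^2-1)) := by
        rw [← Finset.sum_neg_distrib]
        exact Finset.sum_congr rfl fun q _ => hglog q
      calc (∏' p : {p : ℕ // p.Prime ∧ p % 12 = 7},
              (((p:ℕ):ℝ)^2-1)/(((p:ℕ):ℝ)^2+1))
          = Real.exp (∑' q : {p : ℕ // p.Prime ∧ p % 12 = 7},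
              Real.log ((((q:ℕ):ℝ)^2-1)/(((q:ℕ):ℝ)^2+1))) := tprod_g_exp _ hP7
        _ ≤ Real.exp (∑ q ∈ T, Real.log ((((q:ℕ):ℝ)^2-1)/(((q:ℕ):ℝ)^2+1))) := by
            rw [Real.exp_le_exp, e1, e2]
            linarith
        _ = ∏ q ∈ T, (((q:ℕ):ℝ)^2-1)/(((q:ℕ):ℝ)^2+1) := by
            rw [Real.exp_sum]
            exact Finset.prod_congr rfl fun q _ => Real.exp_log (hpos q)
    refine le_trans step1 ?_
    rw [Finset.prod_subtype_eq_prod_filter (fun n : ℕ => ((n:ℝ)^2-1)/((n:ℝ)^2+1)),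
      Finset.prod_filter]
    apply Finset.prod_le_prod
    · intro p hp
      by_cases hc : p.Prime ∧ p % 12 = 7
      · rw [if_pos hc]
        have hq : (5:ℝ) ≤ (p:ℝ) := by exact_mod_cast hP7 _ hc
        have : (0:ℝ) < (p:ℝ)^2 - 1 := by nlinarith
        positivity
      · rw [if_neg hc]; norm_num
    · intro p hp
      have h3b := (key p hp).2.2.1
      by_cases hc : p % 12 = 7
      · rw [if_pos ⟨Nat.prime_of_mem_primeFactors hp, hc⟩]
        rw [if_pos hc] at h3b
        exact h3b
      · rw [if_neg (fun hx => hc hx.2)]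
        rw [if_neg hc] at h3b
        exact h3b
  · -- upper bound
    rw [hratio]
    have step1 : (∏ p ∈ n₀.primeFactors, (Gs p (chi4 p) (k p) / Gs p (chi3 p) (k p)))
        ≤ ∏ q ∈ n₀.primeFactors.subtype (fun p => p.Prime ∧ p % 12 = 5),
            (((q:ℕ):ℝ)^2+1)/(((q:ℕ):ℝ)^2-1) := by
      rw [Finset.prod_subtype_eq_prod_filter (fun n : ℕ => ((n:ℝ)^2+1)/((n:ℝ)^2-1)),
        Finset.prod_filter]
      apply Finset.prod_le_prod
      · intro p hp
        exact le_of_lt (div_pos (key p hp).2.1 (key p hp).1)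
      · intro p hp
        have h4b := (key p hp).2.2.2
        by_cases hc : p % 12 = 5
        · rw [if_pos ⟨Nat.prime_of_mem_primeFactors hp, hc⟩]
          rw [if_pos hc] at h4b
          exact h4b
        · rw [if_neg (fun hx => hc hx.2)]
          rw [if_neg hc] at h4b
          exact h4b
    refine le_trans step1 ?_
    set T := n₀.primeFactors.subtype (fun p => p.Prime ∧ p % 12 = 5)
    have hpos : ∀ q : {p : ℕ // p.Prime ∧ p % 12 = 5},
        0 < (((q:ℕ):ℝ)^2+1)/(((q:ℕ):ℝ)^2-1) := by
      intro q
      have hq : (5:ℝ) ≤ ((q:ℕ):ℝ) := by exact_mod_cast hP5 _ q.2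
      have : (0:ℝ) < ((q:ℕ):ℝ)^2 - 1 := by nlinarith
      positivity
    calc (∏ q ∈ T, (((q:ℕ):ℝ)^2+1)/(((q:ℕ):ℝ)^2-1))
        = Real.exp (∑ q ∈ T, Real.log ((((q:ℕ):ℝ)^2+1)/(((q:ℕ):ℝ)^2-1))) := by
          rw [Real.exp_sum]
          exact (Finset.prod_congr rfl fun q _ => (Real.exp_log (hpos q)).symm)
      _ ≤ Real.exp (∑' q : {p : ℕ // p.Prime ∧ p % 12 = 5},
            Real.log ((((q:ℕ):ℝ)^2+1)/(((q:ℕ):ℝ)^2-1))) := by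
          rw [Real.exp_le_exp]
          exact Summable.sum_le_tsum T (fun q _ => log_nonneg_f ((q:ℕ):ℝ)
            (by exact_mod_cast hP5 _ q.2)) (summable_logf _ hP5)
      _ = ∏' p : {p : ℕ // p.Prime ∧ p % 12 = 5},
            (((p:ℕ):ℝ)^2+1)/(((p:ℕ):ℝ)^2-1) := (tprod_f_exp _ hP5).symm
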